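/- The function φ̃₂ satisfies, for all y ∈ ℝ, the separated eigenvalue equation with eigenvalue λ = 2 and angular parameter l = b: (1 + Q/(2P(y)))·φ̃₂''(y) + (P'(y)/(2P(y)))·φ̃₂'(y) + (2 − b²/P(y))·φ̃₂(y) = 0. -/

import Mathlib

open Real

/-- Rescaled solution `φ̃₁(y) = √((b²+c²−a²)/(2(c²−a²)))·sin y`. -/
noncomputable def phi1 (a b c y : ℝ) : ℝ :=
  Real.sqrt ((b ^ 2 + c ^ 2 - a ^ 2) / (2 * (c ^ 2 - a ^ 2))) * Real.sin y

/-- Rescaled solution `φ̃₂(y) = √((a²+c²−b²)/(2(c²−b²)))·cos y`. -/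
noncomputable def phi2 (a b c y : ℝ) : ℝ :=
  Real.sqrt ((a ^ 2 + c ^ 2 - b ^ 2) / (2 * (c ^ 2 - b ^ 2))) * Real.cos y

/-- Rescaled solution `φ̃₃(y) = √((a²+b²−c²)/(2(b²−c²)))·√(1 − ((b²−a²)/(c²−a²))·sin² y)`. -/
noncomputable def phi3 (a b c y : ℝ) : ℝ :=
  Real.sqrt ((a ^ 2 + b ^ 2 - c ^ 2) / (2 * (b ^ 2 - c ^ 2))) *
    Real.sqrt (1 - (b ^ 2 - a ^ 2) / (c ^ 2 - a ^ 2) * Real.sin y ^ 2)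

/-- `P(y) = (c² + (b²−a²)·cos 2y)/2`. -/
noncomputable def Pm (a b c y : ℝ) : ℝ := (c ^ 2 + (b ^ 2 - a ^ 2) * Real.cos (2 * y)) / 2

/-- `Q = c² − a² − b²`. -/
noncomputable def Qm (a b c : ℝ) : ℝ := c ^ 2 - a ^ 2 - b ^ 2

/-- The function `φ̃` satisfies, for all `y ∈ ℝ`, the separated
eigenvalue equation with eigenvalue `λ = 2` and angular parameter `l = b`:
`(1 + Q/(2P(y)))·φ̃'' + (P'(y)/(2P(y)))·φ̃' + (2 − l²/P(y))·φ̃ = 0`. -/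
theorem phi2_separated_equation (a b c : ℝ) (ha : a ^ 2 < c ^ 2) (hb : b ^ 2 < c ^ 2)
    (habc : a ^ 2 + b ^ 2 ≤ c ^ 2) :
    ∀ y : ℝ,
      (1 + Qm a b c / (2 * Pm a b c y)) * deriv (deriv (phi2 a b c)) y
        + deriv (Pm a b c) y / (2 * Pm a b c y) * deriv (phi2 a b c) y
        + (2 - b ^ 2 / Pm a b c y) * phi2 a b c y = 0 := by
  intro y
  set K := Real.sqrt ((a ^ 2 + c ^ 2 - b ^ 2) / (2 * (c ^ 2 - b ^ 2))) with hK
  have hphi' : deriv (phi2 a b c) = fun y => K * -Real.sin y := by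
    funext t
    unfold phi2
    rw [deriv_const_mul _ Real.differentiable_cos.differentiableAt, Real.deriv_cos]
  have hphi'' : deriv (deriv (phi2 a b c)) y = K * -Real.cos y := by
    rw [hphi']
    have : (fun y => K * -Real.sin y) = fun y => -K * Real.sin y := by funext t; ring
    rw [this, deriv_const_mul _ Real.differentiable_sin.differentiableAt, Real.deriv_sin]
    ring
  have hP' : deriv (Pm a b c) y = -(b ^ 2 - a ^ 2) * Real.sin (2 * y) := by
    have h1 : HasDerivAt (fun y : ℝ => Real.cos (2 * y)) (-Real.sin (2 * y) * 2) y := by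
      exact ((Real.hasDerivAt_cos (2 * y)).comp y ((hasDerivAt_id y).const_mul 2)).congr_deriv (by simp)
    have h2 : HasDerivAt (Pm a b c) ((0 + (b ^ 2 - a ^ 2) * (-Real.sin (2 * y) * 2)) / 2) y := by
      exact ((hasDerivAt_const y (c ^ 2)).add (h1.const_mul (b ^ 2 - a ^ 2))).div_const 2
    rw [h2.deriv]; ring
  have hPpos : 0 < Pm a b c y := by
    have hc : |(b ^ 2 - a ^ 2) * Real.cos (2 * y)| < c ^ 2 := by
      rw [abs_mul]
      calc |b ^ 2 - a ^ 2| * |Real.cos (2 * y)| ≤ |b ^ 2 - a ^ 2| * 1 :=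
            mul_le_mul_of_nonneg_left (abs_cos_le_one _) (abs_nonneg _)
        _ < c ^ 2 := by
            rw [mul_one, abs_lt]
            constructor <;> nlinarith [sq_nonneg a, sq_nonneg b]
    have := (abs_lt.mp hc).1
    unfold Pm; linarith
  have hPne : Pm a b c y ≠ 0 := ne_of_gt hPpos
  rw [hphi'', hphi', hP']
  unfold phi2 Qm
  rw [← hK]
  have hcos2 : Real.cos (2 * y) = 1 - 2 * Real.sin y ^ 2 := by
    rw [Real.cos_two_mul']; nlinarith [Real.sin_sq_add_cos_sq y]
  have hsin2 : Real.sin (2 * y) = 2 * Real.sin y * Real.cos y := Real.sin_two_mul y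
  have hne2 : c ^ 2 + (b ^ 2 - a ^ 2) * (1 - 2 * Real.sin y ^ 2) ≠ 0 := by
    have : Pm a b c y = (c ^ 2 + (b ^ 2 - a ^ 2) * (1 - 2 * Real.sin y ^ 2)) / 2 := by
      unfold Pm; rw [hcos2]
    intro h; apply hPne; rw [this, h]; ring
  unfold Pm
  rw [hcos2, hsin2]
  field_simp
  ring
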